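/- Let μ, ν ∈ ℝ^d with μ ≠ ν, R > 0, w* = R·(ν - μ)/‖ν - μ‖, b* = -(1/2)·⟨ν + μ, w*⟩, and 0 < p₁ < q₁. If a class-0 heterophilic node has filtered feature exactly equal to its mean (p₁μ + q₁ν)/(p₁+q₁), and y = 0, then the binary cross-entropy loss log(1 + exp(⟨x̃, w*⟩ + b*)) is at least (R(q₁ - p₁)/(2(q₁+p₁)))·‖μ - ν‖. -/

import Mathlib

open RealInnerProductSpace

theorem heterophilic_loss_lower_bound {d : ℕ}
    (μ ν : EuclideanSpace ℝ (Fin d)) (hμν : μ ≠ ν)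
    (R : ℝ) (hR : 0 < R)
    (w : EuclideanSpace ℝ (Fin d)) (hw : w = (R / ‖ν - μ‖) • (ν - μ))
    (b : ℝ) (hb : b = -(1 / 2) * ⟪ν + μ, w⟫)
    (p₁ q₁ : ℝ) (hp : 0 < p₁) (hpq : p₁ < q₁)
    (x : EuclideanSpace ℝ (Fin d)) (hx : x = (1 / (p₁ + q₁)) • (p₁ • μ + q₁ • ν)) :
    Real.log (1 + Real.exp (⟪x, w⟫ + b))
      ≥ (R * (q₁ - p₁) / (2 * (q₁ + p₁))) * ‖μ - ν‖ := by
  have hn : ‖ν - μ‖ ≠ 0 := by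
    simp [sub_eq_zero]; exact fun h => hμν h.symm
  have hmn : ‖μ - ν‖ = ‖ν - μ‖ := norm_sub_rev _ _
  have hnorm : ⟪ν - μ, ν - μ⟫ = ‖ν - μ‖ * ‖ν - μ‖ :=
    real_inner_self_eq_norm_mul_norm _
  have hpq0 : p₁ + q₁ ≠ 0 := ne_of_gt (by linarith)
  have key : ⟪x, w⟫ + b = (R * (q₁ - p₁) / (2 * (q₁ + p₁))) * ‖μ - ν‖ := by
    subst hx hw hb
    simp only [real_inner_smul_left, real_inner_smul_right, inner_add_left,
      inner_add_right, inner_sub_left, inner_sub_right, real_inner_comm μ ν] at *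
    set A := (inner ℝ μ μ : ℝ)
    set C := (inner ℝ μ ν : ℝ)
    set E := (inner ℝ ν ν : ℝ)
    rw [hmn]
    have hqp0 : q₁ + p₁ ≠ 0 := ne_of_gt (by linarith)
    field_simp
    linear_combination (q₁ ^ 2 - p₁ ^ 2) * hnorm
  rw [key, ge_iff_le, Real.le_log_iff_exp_le (by positivity)]
  linarith [Real.exp_pos ((R * (q₁ - p₁) / (2 * (q₁ + p₁))) * ‖μ - ν‖)]
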